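/- Let (Ω, ℱ, ℙ) be a probability space and let t > 0, λ > 0, α > 0. Let N : Ω → ℕ have law the Poisson distribution with rate λ·t; let (U_i)_{i∈ℕ} be identically distributed random variables, each uniformly distributed on the interval [0, t]; let (X_i)_{i∈ℕ} be identically distributed random variables with values in a measurable space E and common law μ; and suppose the family consisting of N, all the U_i, and all the X_i is independent. Let f : E → ℝ be measurable with ∫ |f| dμ < ∞. Then E[ ∑_{i=0}^{N-1} e^{-α·(t - U_i)} · f(X_i) ] = ((1 - e^{-α·t})/α) · λ · ∫ f dμ. -/

import Mathlib

open MeasureTheory ProbabilityTheory Real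
open scoped NNReal ENNReal

/-- The index family for the joint independence of a counting variable `N : Ω → ℕ`
(at index `none`), a sequence of real-valued variables `U i` (at indices `some (inl i)`),
and a sequence of `E`-valued variables `X i` (at indices `some (inr i)`). -/
abbrev NUXFam (E : Type*) : Option (ℕ ⊕ ℕ) → Type _ :=
  fun o => match o with
  | none => ULift ℕ
  | some (Sum.inl _) => ULift ℝ
  | some (Sum.inr _) => E

/-- The canonical measurable space structures on `NUXFam E`. -/
def NUXFamMeas (E : Type*) [MeasurableSpace E] : ∀ o, MeasurableSpace (NUXFam E o) :=
  fun o => match o with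
  | none => inferInstance
  | some (Sum.inl _) => inferInstance
  | some (Sum.inr _) => inferInstance

/-- The family of random variables consisting of `N` (at index `none`), the `U i`
(at indices `some (inl i)`) and the `X i` (at indices `some (inr i)`). -/
def NUXFun {Ω E : Type*} (N : Ω → ℕ) (U : ℕ → Ω → ℝ) (X : ℕ → Ω → E) :
    ∀ o, Ω → NUXFam E o :=
  fun o => match o with
  | none => fun ω => ULift.up (N ω)
  | some (Sum.inl i) => fun ω => ULift.up (U i ω)
  | some (Sum.inr i) => X i

/-- If `N` is Poisson with rate `λ * t`, the `U i` are uniform on `[0, t]`,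
the `X i` are identically distributed with law `μ`, the whole family is independent, and `f` is
`μ`-integrable, then `E[∑_{i<N} exp (-α (t - U i)) f (X i)] = ((1 - e^{-αt})/α) λ ∫ f dμ`. -/
lemma poisson_mean_hasSum (r : ℝ≥0) :
    HasSum (fun n : ℕ => (n : ℝ) * poissonPMFReal r n) r := by
  have h1 : HasSum (fun n : ℕ => ((n : ℝ) + 1) * poissonPMFReal r (n + 1)) r := by
    have h2 := (poissonPMFRealSum r).mul_left (r : ℝ)
    rw [mul_one] at h2
    refine h2.congr_fun ?_
    intro n
    unfold poissonPMFReal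
    rw [Nat.factorial_succ]
    have hn : ((n.factorial : ℝ)) ≠ 0 := Nat.cast_ne_zero.mpr n.factorial_ne_zero
    push_cast
    field_simp
    ring
  have h2 : HasSum (fun n : ℕ => ((↑(n + 1) : ℝ)) * poissonPMFReal r (n + 1)) (r : ℝ) := by
    push_cast; exact h1
  have h3 := (hasSum_nat_add_iff (f := fun n : ℕ => (n : ℝ) * poissonPMFReal r n) 1).mp h2
  simpa using h3

lemma poissonPMF_apply (r : ℝ≥0) (n : ℕ) :
    poissonPMF r n = ENNReal.ofReal (poissonPMFReal r n) := rfl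

lemma poisson_mean_ennreal (r : ℝ≥0) :
    ∑' n : ℕ, (n : ℝ≥0∞) * poissonPMF r n = (r : ℝ≥0∞) := by
  have hsum := poisson_mean_hasSum r
  have h : ∀ n : ℕ, (n : ℝ≥0∞) * poissonPMF r n
      = ENNReal.ofReal ((n : ℝ) * poissonPMFReal r n) := by
    intro n
    rw [poissonPMF_apply, ENNReal.ofReal_mul (by positivity), ENNReal.ofReal_natCast]
  simp_rw [h]
  rw [← ENNReal.ofReal_tsum_of_nonneg (fun n => mul_nonneg (by positivity) poissonPMFReal_nonneg) hsum.summable,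
    hsum.tsum_eq, ENNReal.ofReal_coe_nnreal]

lemma poisson_tail_tsum (r : ℝ≥0) :
    ∑' i : ℕ, poissonMeasure r {n | i < n} = (r : ℝ≥0∞) := by
  have happ : ∀ i : ℕ, poissonMeasure r {n | i < n}
      = ∑' n : ℕ, Set.indicator {n | i < n} (poissonPMF r) n := fun i =>
by
    rw [poissonMeasure, Measure.sum_apply _ MeasurableSpace.measurableSet_top]
    refine tsum_congr fun n => ?_
    by_cases h : i < n <;> simp [h, poissonPMF_apply, poissonPMFReal]
  simp_rw [happ]
  rw [ENNReal.tsum_comm]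
  have hinner : ∀ n : ℕ, ∑' i : ℕ, Set.indicator {m | i < m} (⇑(poissonPMF r)) n
      = (n : ℝ≥0∞) * poissonPMF r n := by
    intro n
    have h1 : ∀ i : ℕ, Set.indicator {m | i < m} (⇑(poissonPMF r)) n
        = if i < n then poissonPMF r n else 0 := by
      intro i; simp [Set.indicator_apply, Set.mem_setOf_eq]
    simp_rw [h1]
    rw [tsum_eq_sum (s := Finset.range n)
      (fun i hi => if_neg (fun h => hi (Finset.mem_range.mpr h)))]
    rw [Finset.sum_congr rfl (fun i hi => if_pos (Finset.mem_range.mp hi)),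
      Finset.sum_const, Finset.card_range, nsmul_eq_mul]
  rw [tsum_congr hinner]
  exact poisson_mean_ennreal r

theorem stmt_5 {Ω : Type*} [MeasurableSpace Ω] (P : Measure Ω) [IsProbabilityMeasure P]
    {E : Type*} [MeasurableSpace E] (t lam α : ℝ) (ht : 0 < t) (hlam : 0 < lam) (hα : 0 < α)
    (N : Ω → ℕ) (hN : Measurable N) (hNlaw : P.map N = poissonMeasure ((lam * t).toNNReal))
    (U : ℕ → Ω → ℝ) (hU : ∀ i, Measurable (U i))
    (hUlaw : ∀ i, P.map (U i) = (ENNReal.ofReal t)⁻¹ • volume.restrict (Set.Icc 0 t))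
    (X : ℕ → Ω → E) (hX : ∀ i, Measurable (X i))
    (μ : Measure E) [IsProbabilityMeasure μ] (hXlaw : ∀ i, P.map (X i) = μ)
    (hindep : iIndepFun (m := NUXFamMeas E) (NUXFun N U X) P)
    (f : E → ℝ) (hf : Measurable f) (hfint : Integrable f μ) :
    ∫ ω, ∑ i ∈ Finset.range (N ω), Real.exp (-α * (t - U i ω)) * f (X i ω) ∂P =
      ((1 - Real.exp (-α * t)) / α) * (lam * ∫ x, f x ∂μ) := by
  classical
  set r : ℝ≥0 := (lam * t).toNNReal with hr
  have hrt : (r : ℝ) = lam * t := Real.coe_toNNReal _ (by positivity)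
  set m : ℝ := ∫ x, f x ∂μ with hm
  set g : ℝ → ℝ := fun u => Real.exp (-α * (t - u)) with hgdef
  have hgm : Measurable g := by fun_prop
  set Y : ℕ → Ω → ℝ := fun i ω => g (U i ω) * f (X i ω) with hY
  set φ : ℕ → ℕ → ℝ := fun i n => if i < n then 1 else 0 with hφ
  set q : ℕ → ℝ≥0∞ := fun i => poissonMeasure r {n | i < n} with hq
  have hqne : ∀ i, q i ≠ ⊤ := fun i => measure_ne_top _ _
  have hmeasfam : ∀ o, @Measurable _ _ _ (NUXFamMeas E o) (NUXFun N U X o) := by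
    rintro (_ | (i | i))
    · exact measurable_up.comp hN
    · exact measurable_up.comp (hU i)
    · exact hX i
  -- independence of U i and X i (composed)
  have hUXindep : ∀ i, IndepFun (fun ω => g (U i ω)) (fun ω => f (X i ω)) P := by
    intro i
    have h := hindep.indepFun
      (show (some (Sum.inl i) : Option (ℕ ⊕ ℕ)) ≠ some (Sum.inr i) by simp)
    exact h.comp (hgm.comp measurable_down) hf
  -- independence of the pair (U i, X i) with N, composed
  have hpair : ∀ i, IndepFun (fun ω => φ i (N ω)) (Y i) P := by
    intro i
    have h := hindep.indepFun_prodMk hmeasfam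
      (some (Sum.inl i)) (some (Sum.inr i)) none (by simp) (by simp)
    have h2 := h.comp (show Measurable fun p : ULift ℝ × E => g p.1.down * f p.2 from
        (hgm.comp (measurable_down.comp measurable_fst)).mul (hf.comp measurable_snd))
      (show Measurable fun k : ULift ℕ => φ i k.down from
        (measurable_from_top (f := φ i)).comp measurable_down)
    exact h2.symm
  have hpairE : ∀ i, IndepFun (fun ω => (‖φ i (N ω)‖₊ : ℝ≥0∞)) (fun ω => (‖Y i ω‖₊ : ℝ≥0∞)) P := by
    intro i
    have h := hindep.indepFun_prodMk hmeasfam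
      (some (Sum.inl i)) (some (Sum.inr i)) none (by simp) (by simp)
    have h2 := h.comp
      (show Measurable fun p : ULift ℝ × E => ((‖g p.1.down * f p.2‖₊ : ℝ≥0) : ℝ≥0∞) from
        (((hgm.comp (measurable_down.comp measurable_fst)).mul
          (hf.comp measurable_snd)).nnnorm).coe_nnreal_ennreal)
      (show Measurable fun k : ULift ℕ => ((‖φ i k.down‖₊ : ℝ≥0) : ℝ≥0∞) from
        (measurable_from_top (f := fun n => ((‖φ i n‖₊ : ℝ≥0) : ℝ≥0∞))).comp measurable_down)
    exact h2.symm
  have hYaesm : ∀ i, AEStronglyMeasurable (Y i) P := fun i =>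
    ((hgm.comp (hU i)).mul (hf.comp (hX i))).aestronglyMeasurable
  -- a.e. U i ∈ [0, t]
  have hae : ∀ i, ∀ᵐ ω ∂P, U i ω ∈ Set.Icc 0 t := by
    intro i
    have h0 : P.map (U i) (Set.Icc (0:ℝ) t)ᶜ = 0 := by
      rw [hUlaw i, Measure.smul_apply,
        Measure.restrict_apply measurableSet_Icc.compl]
      simp
    rw [Measure.map_apply (hU i) measurableSet_Icc.compl] at h0
    rw [ae_iff]
    exact h0
  -- expectation of the indicator of {i < N}
  have hφmeas : ∀ i, Measurable (φ i) := fun i => measurable_from_top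
  have hEφ : ∀ i, ∫ ω, φ i (N ω) ∂P = (q i).toReal := by
    intro i
    rw [← integral_map hN.aemeasurable (hφmeas i).aestronglyMeasurable, hNlaw]
    have hind : (fun n => φ i n) = Set.indicator {n | i < n} (1 : ℕ → ℝ) := by
      ext n
      simp [hφ, Set.indicator_apply, Set.mem_setOf_eq]
    rw [hind, integral_indicator_one MeasurableSpace.measurableSet_top]
    rfl
  -- expectation of g (U i)
  have hEg : ∀ i, ∫ ω, g (U i ω) ∂P = (1 - Real.exp (-α * t)) / (α * t) := by
    intro i
    rw [← integral_map (hU i).aemeasurable hgm.aestronglyMeasurable, hUlaw i,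
      integral_smul_measure]
    have h1 : (ENNReal.ofReal t)⁻¹.toReal = t⁻¹ := by
      rw [ENNReal.toReal_inv, ENNReal.toReal_ofReal ht.le]
    have h2 : ∫ u in Set.Icc (0:ℝ) t, g u = (1 - Real.exp (-α * t)) / α := by
      rw [MeasureTheory.integral_Icc_eq_integral_Ioc,
        ← intervalIntegral.integral_of_le ht.le]
      have h3 : ∀ u : ℝ, g u = Real.exp (α * u + -α * t) := by
        intro u; rw [hgdef]; ring_nf
      simp_rw [h3]
      rw [intervalIntegral.integral_comp_mul_add Real.exp (ne_of_gt hα) (-α * t)]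
      simp [integral_exp, mul_comm]
      ring
    rw [h1, h2]
    rw [smul_eq_mul]
    field_simp
  have hEf : ∀ i, ∫ ω, f (X i ω) ∂P = m := by
    intro i
    rw [← integral_map (hX i).aemeasurable hf.aestronglyMeasurable, hXlaw i]
  have hEY : ∀ i, ∫ ω, Y i ω ∂P = (1 - Real.exp (-α * t)) / (α * t) * m := by
    intro i
    rw [show ∫ ω, Y i ω ∂P = ∫ ω, g (U i ω) * f (X i ω) ∂P from rfl,
      (hUXindep i).integral_fun_mul_eq_mul_integral ((hgm.comp (hU i)).aestronglyMeasurable)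
        ((hf.comp (hX i)).aestronglyMeasurable), hEg, hEf]
  have hEZ : ∀ i, ∫ ω, φ i (N ω) * Y i ω ∂P
      = (q i).toReal * ((1 - Real.exp (-α * t)) / (α * t) * m) := by
    intro i
    rw [(hpair i).integral_fun_mul_eq_mul_integral (((hφmeas i).comp hN).aestronglyMeasurable) (hYaesm i),
      hEφ, hEY]
  -- lintegral bounds
  have hK : ∫⁻ x, (‖f x‖₊ : ℝ≥0∞) ∂μ ≠ ⊤ := hfint.2.ne
  have hYlint : ∀ i, ∫⁻ ω, (‖Y i ω‖₊ : ℝ≥0∞) ∂P ≤ ∫⁻ x, (‖f x‖₊ : ℝ≥0∞) ∂μ := by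
    intro i
    have step1 : ∫⁻ ω, (‖Y i ω‖₊ : ℝ≥0∞) ∂P ≤ ∫⁻ ω, (‖f (X i ω)‖₊ : ℝ≥0∞) ∂P := by
      refine lintegral_mono_ae ?_
      filter_upwards [hae i] with ω hω
      have hg1 : ‖g (U i ω)‖₊ ≤ 1 := by
        rw [← NNReal.coe_le_coe, coe_nnnorm, Real.norm_eq_abs,
          abs_of_nonneg (Real.exp_nonneg _), NNReal.coe_one]
        rw [Real.exp_le_one_iff]
        nlinarith [hω.2, hα.le]
      have hmul : ‖Y i ω‖₊ ≤ ‖f (X i ω)‖₊ := by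
        rw [show Y i ω = g (U i ω) * f (X i ω) from rfl, nnnorm_mul]
        calc ‖g (U i ω)‖₊ * ‖f (X i ω)‖₊ ≤ 1 * ‖f (X i ω)‖₊ := mul_le_mul_left hg1 _
          _ = ‖f (X i ω)‖₊ := one_mul _
      exact ENNReal.coe_le_coe.mpr hmul
    have step2 : ∫⁻ ω, (‖f (X i ω)‖₊ : ℝ≥0∞) ∂P = ∫⁻ x, (‖f x‖₊ : ℝ≥0∞) ∂μ := by
      rw [← hXlaw i, lintegral_map hf.nnnorm.coe_nnreal_ennreal (hX i)]
    rw [← step2]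
    exact step1
  have hAlint : ∀ i, ∫⁻ ω, (‖φ i (N ω)‖₊ : ℝ≥0∞) ∂P = q i := by
    intro i
    calc ∫⁻ ω, (‖φ i (N ω)‖₊ : ℝ≥0∞) ∂P
        = ∫⁻ ω, (N ⁻¹' {n | i < n}).indicator 1 ω ∂P := lintegral_congr (fun ω => by
          by_cases h : i < N ω <;>
            simp [hφ, h, Set.indicator_apply, Set.mem_preimage, Set.mem_setOf_eq])
      _ = P (N ⁻¹' {n | i < n}) := lintegral_indicator_one (hN MeasurableSpace.measurableSet_top)
      _ = q i := by rw [← Measure.map_apply hN MeasurableSpace.measurableSet_top, hNlaw]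
  have hZlint : ∀ i, ∫⁻ ω, (‖φ i (N ω) * Y i ω‖₊ : ℝ≥0∞) ∂P
      ≤ q i * ∫⁻ x, (‖f x‖₊ : ℝ≥0∞) ∂μ := by
    intro i
    have hfac := lintegral_mul_eq_lintegral_mul_lintegral_of_indepFun
      (((hφmeas i).comp hN).nnnorm.coe_nnreal_ennreal)
      ((((hgm.comp (hU i)).mul (hf.comp (hX i)))).nnnorm.coe_nnreal_ennreal) (hpairE i)
    calc ∫⁻ ω, (‖φ i (N ω) * Y i ω‖₊ : ℝ≥0∞) ∂P
        = ∫⁻ ω, ((fun ω => (‖φ i (N ω)‖₊ : ℝ≥0∞)) * fun ω => (‖Y i ω‖₊ : ℝ≥0∞)) ω ∂P := by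
          simp_rw [Pi.mul_apply, nnnorm_mul, ENNReal.coe_mul]
      _ = (∫⁻ ω, (‖φ i (N ω)‖₊ : ℝ≥0∞) ∂P) * ∫⁻ ω, (‖Y i ω‖₊ : ℝ≥0∞) ∂P := hfac
      _ = q i * ∫⁻ ω, (‖Y i ω‖₊ : ℝ≥0∞) ∂P := by rw [hAlint]
      _ ≤ q i * ∫⁻ x, (‖f x‖₊ : ℝ≥0∞) ∂μ := mul_le_mul_right (hYlint i) _
  have htsum_ne : ∑' i, ∫⁻ ω, (‖φ i (N ω) * Y i ω‖₊ : ℝ≥0∞) ∂P ≠ ⊤ := by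
    refine ne_top_of_le_ne_top ?_ (ENNReal.tsum_le_tsum hZlint)
    rw [ENNReal.tsum_mul_right,
      show ∑' i, q i = (r : ℝ≥0∞) from poisson_tail_tsum r]
    exact ENNReal.mul_ne_top ENNReal.coe_ne_top hK
  -- pointwise identity
  have hpt : ∀ ω, ∑ i ∈ Finset.range (N ω), Real.exp (-α * (t - U i ω)) * f (X i ω)
      = ∑' i, φ i (N ω) * Y i ω := by
    intro ω
    rw [tsum_eq_sum (s := Finset.range (N ω)) (fun i hi => by
      have h : ¬ i < N ω := fun h => hi (Finset.mem_range.mpr h)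
      simp [hφ, h])]
    exact Finset.sum_congr rfl fun i hi => by
      simp [hφ, Finset.mem_range.mp hi, hY, hgdef]
  calc ∫ ω, ∑ i ∈ Finset.range (N ω), Real.exp (-α * (t - U i ω)) * f (X i ω) ∂P
      = ∫ ω, ∑' i, φ i (N ω) * Y i ω ∂P := by simp_rw [hpt]
    _ = ∑' i, ∫ ω, φ i (N ω) * Y i ω ∂P := integral_tsum
        (fun i => (((hφmeas i).comp hN).aestronglyMeasurable).mul (hYaesm i)) htsum_ne
    _ = ∑' i, (q i).toReal * ((1 - Real.exp (-α * t)) / (α * t) * m) := tsum_congr hEZ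
    _ = (∑' i, (q i).toReal) * ((1 - Real.exp (-α * t)) / (α * t) * m) := tsum_mul_right
    _ = (lam * t) * ((1 - Real.exp (-α * t)) / (α * t) * m) := by
        rw [← ENNReal.tsum_toReal_eq hqne,
          show ∑' i, q i = (r : ℝ≥0∞) from poisson_tail_tsum r, ENNReal.coe_toReal, hrt]
    _ = (1 - Real.exp (-α * t)) / α * (lam * m) := by
        field_simp
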